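/- arXiv:2411.08252 — 3 statements merged into one kernel-verified Lean document; each statement's English description precedes it below -/
import Mathlib

section
/- A topological space that has locally finitely many irreducible components is locally connected; in fact, every point has a neighborhood with finitely many connected components. -/
private lemma IsPreirreducible.open_subset_aux {X : Type*} [TopologicalSpace X] {t W : Set X}
    (ht : IsPreirreducible t) (hW : IsOpen W) : IsPreirreducible (t ∩ W) := by
  intro u v hu hv ⟨a, hat, hau⟩ ⟨b, hbt, hbv⟩
  obtain ⟨c, hct, hc⟩ := ht (u ∩ W) (v ∩ W) (hu.inter hW) (hv.inter hW)
    ⟨a, hat.1, hau, hat.2⟩ ⟨b, hbt.1, hbv, hbt.2⟩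
  exact ⟨c, ⟨hct, hc.1.2⟩, hc.1.1, hc.2.1⟩

/-- Key local statement: inside any open neighborhood there is an open connected
neighborhood. -/
lemma aux_conn {X : Type*} [TopologicalSpace X]
    (h : ∀ x : X, ∃ U : Set X, IsOpen U ∧ x ∈ U ∧
      {V ∈ irreducibleComponents X | (V ∩ U).Nonempty}.Finite)
    (x : X) {O : Set X} (hO : IsOpen O) (hxO : x ∈ O) :
    ∃ W : Set X, IsOpen W ∧ x ∈ W ∧ W ⊆ O ∧ IsPreconnected W := by
  obtain ⟨U, hU, hxU, hfin⟩ := h x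
  set U' := U ∩ O with hU'def
  have hU' : IsOpen U' := hU.inter hO
  have hxU' : x ∈ U' := ⟨hxU, hxO⟩
  set F := {V ∈ irreducibleComponents X | (V ∩ U').Nonempty} with hFdef
  have hFfin : F.Finite := hfin.subset fun V hV =>
    ⟨hV.1, hV.2.mono (Set.inter_subset_inter_right _ Set.inter_subset_left)⟩
  set C := ⋃ V ∈ {V ∈ F | x ∉ V}, V with hCdef
  have hCclosed : IsClosed C := by
    refine Set.Finite.isClosed_biUnion (hFfin.subset fun V hV => hV.1) ?_
    exact fun V hV => isClosed_of_mem_irreducibleComponents V hV.1.1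
  set W := U' \ C with hWdef
  have hWopen : IsOpen W := hU'.sdiff hCclosed
  have hxW : x ∈ W := by
    refine ⟨hxU', ?_⟩
    simp only [hCdef, Set.mem_iUnion]
    rintro ⟨V, ⟨⟨-, hxV⟩, hxV'⟩⟩
    exact hxV hxV'
  refine ⟨W, hWopen, hxW, fun y hy => hy.1.2, ?_⟩
  -- W is the union of the sets W ∩ V over irreducible components V containing x
  have hcover : W = ⋃ V ∈ {V ∈ F | x ∈ V}, (V ∩ W) := by
    apply Set.Subset.antisymm
    · intro w hw
      have hwV : w ∈ irreducibleComponent w := mem_irreducibleComponent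
      have hmem : irreducibleComponent w ∈ F :=
        ⟨irreducibleComponent_mem_irreducibleComponents w, ⟨w, hwV, hw.1⟩⟩
      have hxV : x ∈ irreducibleComponent w := by
        by_contra hx
        exact hw.2 (Set.mem_biUnion ⟨hmem, hx⟩ hwV)
      exact Set.mem_biUnion ⟨hmem, hxV⟩ ⟨hwV, hw⟩
    · intro w hw
      simp only [Set.mem_iUnion] at hw
      obtain ⟨V, -, -, hwW⟩ := hw
      exact hwW
  rw [hcover]
  have : (⋃ V ∈ {V ∈ F | x ∈ V}, (V ∩ W)) = ⋃₀ ((fun V => V ∩ W) '' {V ∈ F | x ∈ V}) := by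
    rw [Set.sUnion_image]
  rw [this]
  refine isPreconnected_sUnion x _ ?_ ?_
  · rintro s ⟨V, ⟨-, hxV⟩, rfl⟩
    exact ⟨hxV, hxW⟩
  · rintro s ⟨V, ⟨⟨hVirr, -⟩, -⟩, rfl⟩
    exact (IsPreirreducible.open_subset_aux hVirr.1.2 hWopen).isPreconnected

/-- A topological space that has locally finitely many irreducible components is locally
connected; in fact, every point has a neighborhood with finitely many connected components. -/
theorem stmt_0 (X : Type*) [TopologicalSpace X]
    (h : ∀ x : X, ∃ U : Set X, IsOpen U ∧ x ∈ U ∧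
      {V ∈ irreducibleComponents X | (V ∩ U).Nonempty}.Finite) :
    LocallyConnectedSpace X ∧
      ∀ x : X, ∃ U ∈ nhds x, Finite (ConnectedComponents U) := by
  constructor
  · rw [locallyConnectedSpace_iff_connected_subsets]
    intro x O hO
    obtain ⟨O', hO'sub, hO'open, hxO'⟩ := mem_nhds_iff.mp hO
    obtain ⟨W, hWopen, hxW, hWO, hWconn⟩ := aux_conn h x hO'open hxO'
    exact ⟨W, hWopen.mem_nhds hxW, hWconn, hWO.trans hO'sub⟩
  · intro x
    obtain ⟨U, hU, hxU, hfin⟩ := h x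
    refine ⟨U, hU.mem_nhds hxU, ?_⟩
    set F := {V ∈ irreducibleComponents X | (V ∩ U).Nonempty} with hFdef
    -- pick a point of V ∩ U for each V ∈ F
    have hpick : ∀ V ∈ F, ∃ y : U, (y : X) ∈ V := by
      rintro V ⟨-, y, hyV, hyU⟩
      exact ⟨⟨y, hyU⟩, hyV⟩
    choose pt hpt using hpick
    have : Finite F := hfin
    refine Finite.of_surjective
      (fun p : F => (ConnectedComponents.mk (pt p.1 p.2) : ConnectedComponents U)) ?_
    rintro c
    obtain ⟨u, rfl⟩ := ConnectedComponents.surjective_coe c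
    have huV : (u : X) ∈ irreducibleComponent (u : X) := mem_irreducibleComponent
    have hmem : irreducibleComponent (u : X) ∈ F :=
      ⟨irreducibleComponent_mem_irreducibleComponents _, ⟨u, huV, u.2⟩⟩
    refine ⟨⟨_, hmem⟩, ?_⟩
    -- the set (val ⁻¹' V) inside U is preconnected, containing both points
    have hpre : IsPreconnected ((Subtype.val : U → X) ⁻¹' irreducibleComponent (u : X)) := by
      rw [← Topology.IsInducing.subtypeVal.isPreconnected_image]
      have himg : (Subtype.val : U → X) '' ((Subtype.val : U → X) ⁻¹' irreducibleComponent (u : X))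
          = irreducibleComponent (u : X) ∩ U := by
        rw [Set.image_preimage_eq_inter_range, Subtype.range_val]
      rw [himg]
      exact ((isIrreducible_irreducibleComponent.2).open_subset_aux hU).isPreconnected
    rw [ConnectedComponents.coe_eq_coe]
    have hmem' : pt _ hmem ∈ (Subtype.val : U → X) ⁻¹' irreducibleComponent (u : X) :=
      hpt _ hmem
    exact (connectedComponent_eq (hpre.subset_connectedComponent huV hmem')).symm
end

section
/- Let f : X → Y be a surjective, quasi-compact continuous map of topological spaces (preimages of quasi-compact opens are quasi-compact). If quasi-compact open subsets form a basis of Y and X is locally connected, then Y is locally connected. -/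
/-- If `f : X → Y` is a surjective, quasi-compact continuous map, quasi-compact open subsets
form a basis of `Y`, and `X` is locally connected, then `Y` is locally connected. -/
theorem stmt_7 (X Y : Type*) [TopologicalSpace X] [TopologicalSpace Y] (f : X → Y)
    (hf : Continuous f) (hsurj : Function.Surjective f)
    (hqc : ∀ V : Set Y, IsOpen V → IsCompact V → IsCompact (f ⁻¹' V))
    (hbasis : ∀ (y : Y) (V : Set Y), V ∈ nhds y →
      ∃ W : Set Y, IsOpen W ∧ IsCompact W ∧ y ∈ W ∧ W ⊆ V)
    [LocallyConnectedSpace X] :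
    LocallyConnectedSpace Y := by
  classical
  rw [locallyConnectedSpace_iff_subsets_isOpen_isConnected]
  intro y U hU
  obtain ⟨W, hWopen, hWcpt, hyW, hWU⟩ := hbasis y U hU
  set P : Set X := f ⁻¹' W with hP
  have hPopen : IsOpen P := hWopen.preimage hf
  have hPcpt : IsCompact P := hqc W hWopen hWcpt
  have hcover : P ⊆ ⋃ x : X, connectedComponentIn P x := fun x hx =>
    Set.mem_iUnion.2 ⟨x, mem_connectedComponentIn hx⟩
  obtain ⟨t, ht⟩ := hPcpt.elim_finite_subcover (fun x => connectedComponentIn P x)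
    (fun x => hPopen.connectedComponentIn) hcover
  set K := connectedComponentIn W y with hKdef
  have hyK : y ∈ K := mem_connectedComponentIn hyW
  have hKW : K ⊆ W := connectedComponentIn_subset W y
  -- image of each component lands in W
  have himW : ∀ x : X, f '' connectedComponentIn P x ⊆ W := by
    intro x
    rintro _ ⟨z, hz, rfl⟩
    exact connectedComponentIn_subset P x hz
  have himPre : ∀ x : X, IsPreconnected (f '' connectedComponentIn P x) := fun x =>
    isPreconnected_connectedComponentIn.image f hf.continuousOn
  -- if the image of a component meets K, it is contained in K
  have hmeet : ∀ x : X, (f '' connectedComponentIn P x ∩ K).Nonempty →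
      f '' connectedComponentIn P x ⊆ K := by
    intro x ⟨w, hw1, hw2⟩
    exact ((himPre x).subset_connectedComponentIn hw1 (himW x)).trans
      (connectedComponentIn_eq hw2).symm.subset
  set s : Finset X := t.filter (fun x => ¬ (f '' connectedComponentIn P x ∩ K).Nonempty)
    with hs
  set B : Set Y := ⋃ x ∈ s, closure (f '' connectedComponentIn P x) with hB
  have hBclosed : IsClosed B :=
    Set.Finite.isClosed_biUnion s.finite_toSet fun x _ => isClosed_closure
  have hKeq : K = W \ B := by
    apply Set.Subset.antisymm
    · intro z hz
      refine ⟨hKW hz, ?_⟩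
      intro hzB
      obtain ⟨x, hxs, hzx⟩ := Set.mem_iUnion₂.1 hzB
      have hxfilt : ¬ (f '' connectedComponentIn P x ∩ K).Nonempty :=
        (Finset.mem_filter.1 hxs).2
      -- D := closure (f '' C_x) ∩ W is preconnected and meets K
      set D := closure (f '' connectedComponentIn P x) ∩ W with hD
      have hDpre : IsPreconnected D :=
        (himPre x).subset_closure
          (Set.subset_inter subset_closure (himW x))
          Set.inter_subset_left
      have hzD : z ∈ D := ⟨hzx, hKW hz⟩
      have hDK : D ⊆ K := by
        exact (hDpre.subset_connectedComponentIn hzD Set.inter_subset_right).trans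
          (connectedComponentIn_eq hz).symm.subset
      rcases Set.eq_empty_or_nonempty (f '' connectedComponentIn P x) with he | hne
      · rw [he, closure_empty] at hzx
        exact hzx
      · exact hxfilt ⟨hne.choose, hne.choose_spec,
          hDK ⟨subset_closure hne.choose_spec, himW x hne.choose_spec⟩⟩
    · rintro z ⟨hzW, hzB⟩
      obtain ⟨x', rfl⟩ := hsurj z
      have hx'P : x' ∈ P := hzW
      obtain ⟨x, hxt, hx'⟩ := Set.mem_iUnion₂.1 (ht hx'P)
      have hzim : f x' ∈ f '' connectedComponentIn P x := ⟨x', hx', rfl⟩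
      by_cases hc : (f '' connectedComponentIn P x ∩ K).Nonempty
      · exact hmeet x hc hzim
      · exact absurd (Set.mem_biUnion (Finset.mem_filter.2 ⟨hxt, hc⟩)
          (subset_closure hzim)) hzB
  refine ⟨K, hKW.trans hWU, ?_, hyK, ⟨⟨y, hyK⟩, isPreconnected_connectedComponentIn⟩⟩
  rw [hKeq, Set.diff_eq]
  exact hWopen.inter hBclosed.isOpen_compl
end

section
/- Let f : X → Y be a continuous map of sober topological spaces which is closed, has finite fibers, and such that the group Aut(X/Y) of homeomorphisms of X over Y acts transitively on every fiber of f. If Y is Noetherian, then X is Noetherian. -/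
open TopologicalSpace in
/-- If `f : X → Y` is a continuous, closed map of sober spaces with finite fibers such that the
group of homeomorphisms of `X` over `Y` acts transitively on each fiber, and `Y` is Noetherian,
then `X` is Noetherian. -/
theorem stmt_11 (X Y : Type*) [TopologicalSpace X] [TopologicalSpace Y]
    [QuasiSober X] [T0Space X] [QuasiSober Y] [T0Space Y] (f : X → Y)
    (hf : Continuous f) (hclosed : IsClosedMap f)
    (hfib : ∀ y : Y, (f ⁻¹' {y}).Finite)
    (htrans : ∀ x z : X, f x = f z →
      ∃ g : X ≃ₜ X, (∀ a : X, f (g a) = f a) ∧ g x = z)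
    [NoetherianSpace Y] :
    NoetherianSpace X := by
  classical
  -- Step 1: each fiber is an antichain for specialization.
  have anti : ∀ x z : X, f x = f z → z ∈ closure ({x} : Set X) → z = x := by
    intro x z hxz hz
    obtain ⟨g, hg, hgx⟩ := htrans x z hxz
    have h1 : x ⤳ g x := by
      rw [hgx]; exact specializes_iff_mem_closure.mpr hz
    have hiter : ∀ k : ℕ, x ⤳ (⇑g)^[k] x := by
      intro k; induction k with
      | zero => simpa using specializes_rfl
      | succ n ih =>
        have h3 : g x ⤳ (⇑g)^[n + 1] x := by
          rw [Function.iterate_succ_apply']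
          exact ih.map g.continuous
        exact h1.trans h3
    have hmem : ∀ k : ℕ, (⇑g)^[k] x ∈ f ⁻¹' {f x} := by
      intro k; induction k with
      | zero => simp
      | succ n ih =>
        rw [Set.mem_preimage, Function.iterate_succ_apply', hg]
        exact ih
    obtain ⟨m, -, n, -, hmn, heq⟩ :=
      Set.infinite_univ.exists_ne_map_eq_of_mapsTo
        (f := fun k : ℕ => (⇑g)^[k] x) (fun k _ => hmem k) (hfib (f x))
    have hper : ∃ k : ℕ, 0 < k ∧ (⇑g)^[k] x = x := by
      have main : ∀ a b : ℕ, a < b → (⇑g)^[a] x = (⇑g)^[b] x →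
          ∃ k : ℕ, 0 < k ∧ (⇑g)^[k] x = x := by
        intro a b hab h
        refine ⟨b - a, by omega, ?_⟩
        have : (⇑g)^[a] ((⇑g)^[b - a] x) = (⇑g)^[a] x := by
          rw [← Function.iterate_add_apply]
          rw [show a + (b - a) = b by omega, h]
        exact (g.injective.iterate a) this
      rcases lt_or_gt_of_ne hmn with h | h
      · exact main m n h heq
      · exact main n m h heq.symm
    obtain ⟨k, hk, hkx⟩ := hper
    have h2 : g x ⤳ x := by
      have h4 : g x ⤳ (⇑g)^[k - 1 + 1] x := by
        rw [Function.iterate_succ_apply']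
        exact (hiter (k - 1)).map g.continuous
      rwa [show k - 1 + 1 = k by omega, hkx] at h4
    have : x = g x := (h1.antisymm h2).eq
    rw [← hgx, ← this]
  -- Step 2: by Noetherian induction on closed subsets of `Y`,
  -- every subset of `X` lying over a closed subset of `Y` is compact.
  have key : ∀ C : Closeds Y, ∀ s : Set X, s ⊆ f ⁻¹' (C : Set Y) → IsCompact s := by
    intro C
    induction C using (wellFounded_lt (α := Closeds Y)).induction with
    | _ C IH =>
    intro s hsub
    rcases s.eq_empty_or_nonempty with rfl | hne
    · exact isCompact_empty
    have hcls : closure s ⊆ f ⁻¹' (C : Set Y) :=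
      closure_minimal hsub (C.2.preimage hf)
    set D : Closeds Y := ⟨f '' closure s, hclosed _ isClosed_closure⟩ with hDdef
    have hDC : D ≤ C := by
      intro y hy
      obtain ⟨p, hp, rfl⟩ := hy
      exact hcls hp
    by_cases hlt : D < C
    · exact IH D hlt s fun p hp => ⟨p, subset_closure hp, rfl⟩
    have hD : (D : Set Y) = (C : Set Y) := by
      have : D = C := le_antisymm hDC (by
        by_contra h
        exact hlt (lt_of_le_of_ne hDC (fun hh => h (hh ▸ le_rfl))))
      rw [this]
    have hCne : ((C : Set Y)).Nonempty := by
      obtain ⟨p, hp⟩ := hne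
      exact ⟨f p, hsub hp⟩
    by_cases hirr : IsIrreducible (C : Set Y)
    · -- irreducible case
      set η := hirr.genericPoint with hηdef
      have hη : closure ({η} : Set Y) = (C : Set Y) :=
        hirr.isGenericPoint_genericPoint C.2
      -- the generic fiber is nonempty
      have hηD : η ∈ (D : Set Y) := by
        rw [hD, ← hη]; exact subset_closure (Set.mem_singleton _)
      obtain ⟨x₀, -, hx₀⟩ := hηD
      -- structure: f ⁻¹ C is the union of closures of generic fiber points
      set W : Set X := ⋃ x ∈ f ⁻¹' {η}, closure ({x} : Set X) with hWdef
      have hWclosed : IsClosed W :=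
        (hfib η).isClosed_biUnion fun i _ => isClosed_closure
      have hWsub : ∀ x : X, f x = η → closure ({x} : Set X) ⊆ W := by
        intro x hx
        exact Set.subset_biUnion_of_mem (u := fun x => closure ({x} : Set X)) hx
      have hCfW : (C : Set Y) ⊆ f '' W := by
        rw [← hη]
        refine closure_minimal ?_ (hclosed _ hWclosed)
        rintro y rfl
        exact ⟨x₀, hWsub x₀ hx₀ (subset_closure (Set.mem_singleton _)), hx₀⟩
      have hstruct : f ⁻¹' (C : Set Y) ⊆ W := by
        intro p hp
        obtain ⟨w, hwW, hwp⟩ := hCfW hp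
        obtain ⟨g, hg, hgw⟩ := htrans w p hwp
        simp only [hWdef, Set.mem_iUnion] at hwW
        obtain ⟨x, hx, hwx⟩ := hwW
        have : p ∈ closure ({g x} : Set X) := by
          rw [← Set.image_singleton, ← g.image_closure]
          exact ⟨w, hwx, hgw⟩
        exact hWsub (g x) (by rw [hg x]; exact hx) this
      -- each piece `s ∩ closure {x}` is compact
      have piece : ∀ x : X, f x = η → ∀ t : Set X, t ⊆ closure ({x} : Set X) →
          IsCompact t := by
        intro x hx t ht
        refine isCompact_of_finite_subcover fun {ι} U hUo hcov => ?_
        rcases t.eq_empty_or_nonempty with rfl | ⟨p, hp⟩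
        · exact ⟨∅, by simp⟩
        obtain ⟨i₀, hpi₀⟩ := Set.mem_iUnion.mp (hcov hp)
        have hxU : x ∈ U i₀ := by
          obtain ⟨q, hq1, hq2⟩ := mem_closure_iff.mp (ht hp) (U i₀) (hUo i₀) hpi₀
          rwa [Set.mem_singleton_iff.mp hq2] at hq1
        set Z : Set X := closure ({x} : Set X) \ U i₀ with hZdef
        have hZclosed : IsClosed Z := isClosed_closure.sdiff (hUo i₀)
        have hZC : f '' Z ⊆ (C : Set Y) := by
          rintro y ⟨z, hz, rfl⟩
          rw [← hη]
          have h5 : f x ⤳ f z := (specializes_iff_mem_closure.mpr hz.1).map hf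
          have h6 := specializes_iff_mem_closure.mp h5
          rwa [hx] at h6
        have hηZ : η ∉ f '' Z := by
          rintro ⟨z, hz, hzη⟩
          have : z = x := anti x z (by rw [hx, hzη]) hz.1
          rw [this] at hz
          exact hz.2 hxU
        set D' : Closeds Y := ⟨f '' Z, hclosed _ hZclosed⟩ with hD'def
        have hD'C : D' < C := lt_of_le_of_ne hZC (by
          intro h
          apply hηZ
          rw [show f '' Z = (D' : Set Y) from rfl, h, ← hη]
          exact subset_closure (Set.mem_singleton _))
        have hcomp : IsCompact (t \ U i₀) := by
          refine IH D' hD'C _ ?_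
          intro q hq
          exact ⟨q, ⟨ht hq.1, hq.2⟩, rfl⟩
        obtain ⟨F, hF⟩ := hcomp.elim_finite_subcover U hUo
          (fun q hq => hcov hq.1)
        refine ⟨insert i₀ F, fun q hq => ?_⟩
        by_cases hqU : q ∈ U i₀
        · exact Set.mem_biUnion (Finset.mem_insert_self i₀ F) hqU
        · obtain ⟨i, hi, hqi⟩ := Set.mem_iUnion₂.mp (hF ⟨hq, hqU⟩)
          exact Set.mem_biUnion (Finset.mem_insert_of_mem hi) hqi
      have hsW : s = ⋃ x ∈ f ⁻¹' {η}, s ∩ closure ({x} : Set X) := by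
        apply Set.eq_of_subset_of_subset
        · intro p hp
          have := hstruct (hsub hp)
          simp only [hWdef, Set.mem_iUnion] at this
          obtain ⟨x, hx, hpx⟩ := this
          exact Set.mem_iUnion₂.mpr ⟨x, hx, hp, hpx⟩
        · intro p hp
          obtain ⟨x, hx, hp1, -⟩ := Set.mem_iUnion₂.mp hp
          exact hp1
      rw [hsW]
      exact (hfib η).isCompact_biUnion fun x hx =>
        piece x hx _ Set.inter_subset_right
    · -- reducible case: split into two smaller closed sets
      have hpre : ¬ IsPreirreducible (C : Set Y) := fun h => hirr ⟨hCne, h⟩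
      rw [IsPreirreducible] at hpre
      push_neg at hpre
      obtain ⟨u, v, hu, hv, hCu, hCv, huv⟩ := hpre
      have h1 : ∀ (w : Set Y) (hw : IsOpen w), ((C : Set Y) ∩ w).Nonempty →
          (⟨(C : Set Y) \ w, C.2.sdiff hw⟩ : Closeds Y) < C := by
        intro w hw ⟨y, hy1, hy2⟩
        refine lt_of_le_of_ne (fun z hz => hz.1) ?_
        intro h
        have : y ∈ (C : Set Y) \ w := by
          rw [show ((C : Set Y) \ w) = ((⟨(C : Set Y) \ w, C.2.sdiff hw⟩ : Closeds Y) : Set Y) from rfl, h]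
          exact hy1
        exact this.2 hy2
      have hsplit : s = (s ∩ f ⁻¹' ((C : Set Y) \ u)) ∪ (s ∩ f ⁻¹' ((C : Set Y) \ v)) := by
        apply Set.eq_of_subset_of_subset
        · intro p hp
          have hpC : f p ∈ (C : Set Y) := hsub hp
          by_cases hpu : f p ∈ u
          · refine Or.inr ⟨hp, hpC, fun hpv => ?_⟩
            exact Set.eq_empty_iff_forall_notMem.mp huv _ ⟨hpC, hpu, hpv⟩
          · exact Or.inl ⟨hp, hpC, hpu⟩
        · rintro p (hp | hp) <;> exact hp.1
      rw [hsplit]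
      exact (IH _ (h1 u hu hCu) _ Set.inter_subset_right).union
        (IH _ (h1 v hv hCv) _ Set.inter_subset_right)
  refine noetherianSpace_iff_isCompact.mpr fun s => key ⊤ s ?_
  simp
end
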